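/- If v is a C² function on a ball B ⊂ ℝ^{n+1} contained in {y > 0} satisfying -Δv = |∇v|² + (a/y) ∂v/∂y, then the function w = |∇v|² satisfies the Bochner-type identity (1/2)Δw = |∇²v|² - ∇w·∇v - (a/(2y)) ∂w/∂y + (a/y²) (∂v/∂y)². -/

import Mathlib

/-- Partial derivative in the `i`-th coordinate direction. -/
noncomputable def pd {m : ℕ} (i : Fin m) (f : EuclideanSpace ℝ (Fin m) → ℝ)
    (z : EuclideanSpace ℝ (Fin m)) : ℝ :=
  fderiv ℝ f z (EuclideanSpace.single i 1)

/-- Euclidean Laplacian as the sum of second partial derivatives. -/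
noncomputable def lap {m : ℕ} (f : EuclideanSpace ℝ (Fin m) → ℝ)
    (z : EuclideanSpace ℝ (Fin m)) : ℝ :=
  ∑ i, pd i (fun w => pd i f w) z

section helpers
variable {m : ℕ} {z : EuclideanSpace ℝ (Fin m)}

lemma pd_contDiffAt {k : ℕ} {f : EuclideanSpace ℝ (Fin m) → ℝ}
    (hf : ContDiffAt ℝ (k+1) f z) (i : Fin m) : ContDiffAt ℝ k (pd i f) z := by
  have h1 : ContDiffAt ℝ k (fderiv ℝ f) z := hf.fderiv_right (by norm_cast)
  exact h1.clm_apply contDiffAt_const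

lemma pd_eq_snd {f : EuclideanSpace ℝ (Fin m) → ℝ}
    (hf : ContDiffAt ℝ 2 f z) (i j : Fin m) :
    pd i (fun w => pd j f w) z =
      fderiv ℝ (fderiv ℝ f) z (EuclideanSpace.single i 1) (EuclideanSpace.single j 1) := by
  have hd : DifferentiableAt ℝ (fderiv ℝ f) z :=
    (hf.fderiv_right (m := 1) (by norm_cast)).differentiableAt (by norm_num)
  have : pd i (fun w => pd j f w) z
      = fderiv ℝ (fun w => (fderiv ℝ f w) (EuclideanSpace.single j 1)) z
          (EuclideanSpace.single i 1) := rfl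
  rw [this, fderiv_clm_apply hd (differentiableAt_const _)]
  simp

lemma pd_comm {f : EuclideanSpace ℝ (Fin m) → ℝ}
    (hf : ContDiffAt ℝ 2 f z) (i j : Fin m) :
    pd i (fun w => pd j f w) z = pd j (fun w => pd i f w) z := by
  rw [pd_eq_snd hf, pd_eq_snd hf]
  exact (hf.isSymmSndFDerivAt (by simp [minSmoothness_of_isRCLikeNormedField])) _ _

lemma pd_congr_nhds {f g : EuclideanSpace ℝ (Fin m) → ℝ} (h : f =ᶠ[nhds z] g) (i : Fin m) :
    pd i f z = pd i g z := by
  unfold pd; rw [h.fderiv_eq]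

lemma pd_sum {ι : Type*} [Fintype ι] {g : ι → EuclideanSpace ℝ (Fin m) → ℝ}
    (hg : ∀ j, DifferentiableAt ℝ (g j) z) (i : Fin m) :
    pd i (fun w => ∑ j, g j w) z = ∑ j, pd i (g j) z := by
  unfold pd
  rw [fderiv_fun_sum (fun j _ => hg j)]
  simp

lemma pd_mul {f g : EuclideanSpace ℝ (Fin m) → ℝ}
    (hf : DifferentiableAt ℝ f z) (hg : DifferentiableAt ℝ g z) (i : Fin m) :
    pd i (fun w => f w * g w) z = pd i f z * g z + f z * pd i g z := by
  unfold pd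
  rw [fderiv_fun_mul hf hg]
  simp only [ContinuousLinearMap.add_apply, ContinuousLinearMap.smul_apply, smul_eq_mul]
  ring

lemma pd_sq {f : EuclideanSpace ℝ (Fin m) → ℝ}
    (hf : DifferentiableAt ℝ f z) (i : Fin m) :
    pd i (fun w => f w ^ 2) z = 2 * f z * pd i f z := by
  have : pd i (fun w => f w ^ 2) z = pd i (fun w => f w * f w) z := by
    congr 1; ext w; ring
  rw [this, pd_mul hf hf]; ring

lemma pd_const_mul {f : EuclideanSpace ℝ (Fin m) → ℝ} (b : ℝ)
    (hf : DifferentiableAt ℝ f z) (i : Fin m) :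
    pd i (fun w => b * f w) z = b * pd i f z := by
  unfold pd
  rw [fderiv_const_mul hf]
  simp

lemma pd_neg {f : EuclideanSpace ℝ (Fin m) → ℝ} (i : Fin m) :
    pd i (fun w => -(f w)) z = -(pd i f z) := by
  unfold pd; rw [fderiv_fun_neg]; simp

lemma pd_sub {f g : EuclideanSpace ℝ (Fin m) → ℝ}
    (hf : DifferentiableAt ℝ f z) (hg : DifferentiableAt ℝ g z) (i : Fin m) :
    pd i (fun w => f w - g w) z = pd i f z - pd i g z := by
  unfold pd; rw [fderiv_fun_sub hf hg]; simp

lemma pd_coord (k : Fin m) (i : Fin m) :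
    pd i (fun w : EuclideanSpace ℝ (Fin m) => w k) z = if k = i then 1 else 0 := by
  unfold pd
  have : (fun w : EuclideanSpace ℝ (Fin m) => w k)
      = (EuclideanSpace.proj k : EuclideanSpace ℝ (Fin m) →L[ℝ] ℝ) := rfl
  rw [this, ContinuousLinearMap.fderiv]
  simp [EuclideanSpace.single_apply]

lemma pd_inv_coord (k : Fin m) (i : Fin m) (hz : z k ≠ 0) :
    pd i (fun w : EuclideanSpace ℝ (Fin m) => (w k)⁻¹) z
      = -(if k = i then 1 else 0) / (z k) ^ 2 := by
  have h1 : HasFDerivAt (fun w : EuclideanSpace ℝ (Fin m) => w k)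
      (EuclideanSpace.proj k : EuclideanSpace ℝ (Fin m) →L[ℝ] ℝ) z :=
    (EuclideanSpace.proj k : EuclideanSpace ℝ (Fin m) →L[ℝ] ℝ).hasFDerivAt
  have h2 := (hasDerivAt_inv hz).comp_hasFDerivAt z h1
  have h2' : HasFDerivAt (fun w : EuclideanSpace ℝ (Fin m) => (w k)⁻¹)
      ((-(z k ^ 2)⁻¹) • (EuclideanSpace.proj k : EuclideanSpace ℝ (Fin m) →L[ℝ] ℝ)) z := h2
  unfold pd
  rw [h2'.fderiv]
  simp [EuclideanSpace.single_apply]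
  by_cases h : k = i
  · simp [h]; field_simp
  · simp [h]

end helpers

lemma algebra_key {N : Type*} [Fintype N] [DecidableEq N] (y a : ℝ) (hy : y ≠ 0) (ℓ : N)
    (D G L : N → ℝ) (H P : N → N → ℝ) (W2 : ℝ)
    (hW2 : W2 = ∑ i, ∑ j, 2*(H i j^2 + D j * P i j))
    (hP : ∀ j, ∑ i, P i j = L j)
    (hL : ∀ j, L j = -(G j) + (if ℓ = j then a/y^2*D ℓ else 0) - a*y⁻¹*H j ℓ)
    (hG : G ℓ = ∑ j, 2*D j*H j ℓ) :
    (1/2)*W2 = (∑ i, ∑ j, H i j^2) - (∑ i, G i * D i) - (a/(2*y))*G ℓ + (a/y^2)*D ℓ^2 := by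
  have s1 : W2 = 2*((∑ i, ∑ j, H i j^2) + ∑ i, ∑ j, D j * P i j) := by
    rw [hW2]; simp [Finset.mul_sum, mul_add, Finset.sum_add_distrib]
  have s2 : ∑ i, ∑ j, D j * P i j = ∑ j, D j * L j := by
    rw [Finset.sum_comm]
    exact Finset.sum_congr rfl fun j _ => by rw [← hP j, Finset.mul_sum]
  have s3 : ∑ j, D j * L j
      = a/y^2*D ℓ*D ℓ + (-(∑ j, D j * G j) - a*y⁻¹*(∑ j, D j * H j ℓ)) := by
    have : ∀ j, D j * L j
        = (if ℓ = j then a/y^2*D ℓ*D j else 0) + (-(D j * G j) - a*y⁻¹*(D j * H j ℓ)) := by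
      intro j; rw [hL j]; split_ifs with h <;> ring
    rw [Finset.sum_congr rfl fun j _ => this j, Finset.sum_add_distrib,
      Finset.sum_ite_eq]
    simp [Finset.sum_sub_distrib, Finset.mul_sum]
  have s4 : ∑ j, D j * H j ℓ = G ℓ / 2 := by
    rw [hG, Finset.sum_div]
    exact Finset.sum_congr rfl fun j _ => by ring
  have s5 : ∑ j, D j * G j = ∑ i, G i * D i :=
    Finset.sum_congr rfl fun j _ => mul_comm _ _
  rw [s1, s2, s3, s4, s5]
  field_simp
  ring

/-- Bochner-type identity: if `v` is smooth on a ball `B ⊆ {y > 0}` and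
`-Δv = |∇v|² + (a/y) ∂v/∂y` on `B`, then `w = |∇v|²` satisfies
`(1/2)Δw = |∇²v|² - ∇w·∇v - (a/(2y)) ∂w/∂y + (a/y²)(∂v/∂y)²`. -/
theorem stmt2 (n : ℕ) (a : ℝ) (ha : a ∈ Set.Ioo (-1 : ℝ) 1)
    (c : EuclideanSpace ℝ (Fin (n+1))) (R : ℝ) (hR : 0 < R)
    (hball : Metric.ball c R ⊆ {z : EuclideanSpace ℝ (Fin (n+1)) | 0 < z (Fin.last n)})
    (v : EuclideanSpace ℝ (Fin (n+1)) → ℝ)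
    (hv : ContDiffOn ℝ 3 v (Metric.ball c R))
    (hode : ∀ z ∈ Metric.ball c R,
      - lap v z = (∑ i, (pd i v z) ^ 2) + (a / z (Fin.last n)) * pd (Fin.last n) v z) :
    ∀ z ∈ Metric.ball c R,
      (1/2 : ℝ) * lap (fun w => ∑ i, (pd i v w) ^ 2) z =
        (∑ i, ∑ j, (pd i (fun w => pd j v w) z) ^ 2)
          - (∑ i, pd i (fun w => ∑ j, (pd j v w) ^ 2) z * pd i v z)
          - (a / (2 * z (Fin.last n))) * pd (Fin.last n) (fun w => ∑ j, (pd j v w) ^ 2) z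
          + (a / (z (Fin.last n)) ^ 2) * (pd (Fin.last n) v z) ^ 2 := by

  intro z hz
  set B := Metric.ball c R with hB
  have hBo : IsOpen B := Metric.isOpen_ball
  set ℓ := Fin.last n with hℓ
  set W : EuclideanSpace ℝ (Fin (n+1)) → ℝ := fun w => ∑ j, (pd j v w) ^ 2 with hWdef
  have hy : (0:ℝ) < z ℓ := hball hz
  have hy0 : z ℓ ≠ 0 := ne_of_gt hy
  -- regularity
  have h3 : ∀ x ∈ B, ContDiffAt ℝ 3 v x := fun x hx => hv.contDiffAt (hBo.mem_nhds hx)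
  have h2 : ∀ x ∈ B, ∀ j, ContDiffAt ℝ 2 (pd j v) x := fun x hx j =>
    pd_contDiffAt (k := 2) (by exact_mod_cast h3 x hx) j
  have h1 : ∀ x ∈ B, ∀ i j, ContDiffAt ℝ 1 (pd i (pd j v)) x := fun x hx i j =>
    pd_contDiffAt (k := 1) (by exact_mod_cast h2 x hx j) i
  have dv : ∀ x ∈ B, ∀ j, DifferentiableAt ℝ (pd j v) x := fun x hx j =>
    (h2 x hx j).differentiableAt two_ne_zero
  have dvv : ∀ x ∈ B, ∀ i j, DifferentiableAt ℝ (pd i (pd j v)) x := fun x hx i j =>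
    (h1 x hx i j).differentiableAt one_ne_zero
  have dW : ∀ x ∈ B, DifferentiableAt ℝ W x := fun x hx =>
    DifferentiableAt.fun_sum fun j _ => (dv x hx j).pow 2
  have hmem : B ∈ nhds z := hBo.mem_nhds hz
  -- F1 : first derivatives of W
  have F1 : ∀ (i : Fin (n+1)), ∀ x ∈ B,
      pd i W x = ∑ j, 2 * pd j v x * pd i (pd j v) x := by
    intro i x hx
    rw [hWdef, pd_sum (fun j => (dv x hx j).fun_pow 2) i]
    exact Finset.sum_congr rfl fun j _ => pd_sq (dv x hx j) i
  -- F2 : second derivatives of W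
  have F2 : ∀ (i : Fin (n+1)),
      pd i (pd i W) z = ∑ j, 2 * ((pd i (pd j v) z)^2 + pd j v z * pd i (pd i (pd j v)) z) := by
    intro i
    have e1 : pd i W =ᶠ[nhds z] fun x => ∑ j, 2 * pd j v x * pd i (pd j v) x :=
      Filter.eventuallyEq_of_mem hmem (fun x hx => F1 i x hx)
    rw [pd_congr_nhds e1 i,
      pd_sum (fun j => ((dv z hz j).const_mul 2).fun_mul (dvv z hz i j)) i]
    refine Finset.sum_congr rfl fun j _ => ?_
    have := pd_mul (f := fun x => 2 * pd j v x) (g := pd i (pd j v))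
      ((dv z hz j).const_mul 2) (dvv z hz i j) i
    rw [show (fun x => 2 * pd j v x * pd i (pd j v) x)
        = (fun x => (fun y => 2 * pd j v y) x * pd i (pd j v) x) from rfl, this,
      pd_const_mul 2 (dv z hz j) i]
    ring
  -- F3 : sum of third derivatives equals derivative of laplacian
  have F3 : ∀ (j : Fin (n+1)),
      ∑ i, pd i (pd i (pd j v)) z = pd j (lap v) z := by
    intro j
    have step : ∀ (i : Fin (n+1)),
        pd i (pd i (pd j v)) z = pd j (pd i (pd i v)) z := by
      intro i
      have e : pd i (pd j v) =ᶠ[nhds z] pd j (pd i v) :=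
        Filter.eventuallyEq_of_mem hmem
          (fun x hx => pd_comm ((h3 x hx).of_le (by norm_num)) i j)
      rw [pd_congr_nhds e i]
      exact pd_comm (pd_contDiffAt (k := 2) (by exact_mod_cast h3 z hz) i) i j
    rw [Finset.sum_congr rfl fun i _ => step i]
    have hd : ∀ i : Fin (n+1), DifferentiableAt ℝ (pd i (pd i v)) z := fun i =>
      dvv z hz i i
    rw [← pd_sum (fun i => hd i) j]
    rfl
  -- F4 : derivative of laplacian via the ODE
  have F4 : ∀ (j : Fin (n+1)),
      pd j (lap v) z = -(pd j W z)
        + (if ℓ = j then a / (z ℓ)^2 * pd ℓ v z else 0)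
        - a * (z ℓ)⁻¹ * pd j (pd ℓ v) z := by
    intro j
    have eL : lap v =ᶠ[nhds z]
        fun x => -(W x) - (a * (x ℓ)⁻¹) * pd ℓ v x := by
      refine Filter.eventuallyEq_of_mem hmem (fun x hx => ?_)
      have := hode x hx
      have hx' : (0:ℝ) < x ℓ := hball hx
      rw [div_eq_mul_inv] at this
      simp only [hWdef]
      linarith [this]
    rw [pd_congr_nhds eL j]
    have dinv : DifferentiableAt ℝ (fun x : EuclideanSpace ℝ (Fin (n+1)) => (x ℓ)⁻¹) z :=
      ((EuclideanSpace.proj ℓ : EuclideanSpace ℝ (Fin (n+1)) →L[ℝ] ℝ).differentiableAt).inv hy0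
    have df : DifferentiableAt ℝ (fun x : EuclideanSpace ℝ (Fin (n+1)) => a * (x ℓ)⁻¹) z :=
      dinv.const_mul a
    have dg : DifferentiableAt ℝ (pd ℓ v) z := dv z hz ℓ
    rw [pd_sub ((dW z hz).fun_neg) (df.fun_mul dg) j, pd_neg j,
      pd_mul df dg j, pd_const_mul a dinv j, pd_inv_coord ℓ j hy0]
    split_ifs with h <;> ring
  -- F5 : last-direction derivative of W
  have F5 : pd ℓ W z = ∑ j, 2 * pd j v z * pd j (pd ℓ v) z := by
    rw [F1 ℓ z hz]
    refine Finset.sum_congr rfl fun j _ => ?_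
    rw [pd_comm ((h3 z hz).of_le (by norm_num)) ℓ j]
  -- assemble
  have hlap : lap W z = ∑ i, ∑ j,
      2 * ((pd i (pd j v) z)^2 + pd j v z * pd i (pd i (pd j v)) z) := by
    unfold lap
    exact Finset.sum_congr rfl fun i _ => F2 i
  have key := algebra_key (z ℓ) a hy0 ℓ
    (fun j => pd j v z) (fun i => pd i W z) (fun j => pd j (lap v) z)
    (fun i j => pd i (pd j v) z) (fun i j => pd i (pd i (pd j v)) z)
    (lap W z) hlap F3 F4 (by exact F5)
  exact key
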